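/- Let F be a formal power series over ℚ satisfying the differential equation X(X+1)(8X−1)·F'' + (24X² + 14X − 1)·F' + 2(4X+1)·F = 0. Then the coefficients a(n) of F satisfy (n+1)²·a(n+1) = (7n² + 7n + 2)·a(n) + 8n²·a(n−1) for all n ≥ 1. -/

import Mathlib

open PowerSeries

theorem franel_ode_coeff_recursion (F : PowerSeries ℚ)
    (hF : X * (X + 1) * (8 * X - 1) * PowerSeries.derivative ℚ (PowerSeries.derivative ℚ F)
        + (24 * X ^ 2 + 14 * X - 1) * PowerSeries.derivative ℚ F
        + 2 * (4 * X + 1) * F = 0) :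
    ∀ n : ℕ, 1 ≤ n →
      ((n : ℚ) + 1) ^ 2 * coeff (n + 1) F
        = (7 * (n : ℚ) ^ 2 + 7 * n + 2) * coeff n F
          + 8 * (n : ℚ) ^ 2 * coeff (n - 1) F := by
  set F₁ := PowerSeries.derivative ℚ F with hF₁
  set F₂ := PowerSeries.derivative ℚ F₁ with hF₂
  have expand : X * (X + 1) * (8 * X - 1) * F₂ + (24 * X ^ 2 + 14 * X - 1) * F₁
      + 2 * (4 * X + 1) * F
      = C 8 * (X * (X * (X * F₂))) + C 7 * (X * (X * F₂)) - X * F₂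
        + C 24 * (X * (X * F₁)) + C 14 * (X * F₁) - F₁
        + (C 8 * (X * F) + C 2 * F) := by
    simp only [map_ofNat]
    ring
  intro n hn
  obtain ⟨m, rfl⟩ : ∃ m, n = m + 1 := ⟨n - 1, (Nat.succ_pred_eq_of_pos hn).symm⟩
  have key := congrArg (coeff (m + 1)) (expand ▸ hF)
  simp only [map_add, map_sub, coeff_C_mul, coeff_succ_X_mul, coeff_derivative, hF₁, hF₂,
    map_zero, Nat.add_sub_cancel] at key ⊢
  rcases m with _ | k
  · simp only [coeff_zero_X_mul, Nat.cast_zero, Nat.cast_one] at key ⊢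
    push_cast at key ⊢
    linarith
  · rcases k with _ | j
    · simp only [coeff_succ_X_mul, coeff_zero_X_mul, coeff_derivative] at key ⊢
      push_cast at key ⊢
      linarith
    · simp only [coeff_succ_X_mul, coeff_derivative, Nat.cast_add, Nat.cast_one] at key ⊢
      push_cast at key ⊢
      ring_nf at key ⊢
      linarith
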